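/- Suppose m ≡ 22 (mod 24). Then j‴ ∈ J, P(j‴) ≠ 0, and V(j‴) = (2/3)(m−1) − s((m−1)/3) − 1. -/

import Mathlib

open Finset

/-- `s a` is the sum of the binary digits of `a`. -/
def sdig (a : ℕ) : ℕ := (Nat.digits 2 a).sum

/-- `carries a b` is the number of carries when adding `a` and `b` in base 2:
`c(a,b) = s(a) + s(b) - s(a+b)`. -/
def carries (a b : ℕ) : ℕ := sdig a + sdig b - sdig (a + b)

/-- The generalized binomial coefficient `C_r(x) = x(x-1)⋯(x-r+1)/r!` (with `C_0(x) = 1`). -/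
def genBinom (x : ℚ) (r : ℕ) : ℚ :=
  (∏ p ∈ Finset.range r, (x - p)) / (Nat.factorial r : ℚ)

/-- Membership in the index set `J`: here `j i` (for `i : Fin n`) is the paper's
`j_{i+1}`, so the defining relation `(2^n-1)j_1 + ⋯ + (2-1)j_n = m+1` becomes
`∑ k, (2^(n-k) - 1) * j k = m + 1`. -/
def inJ (n m : ℕ) (j : Fin n → ℕ) : Prop :=
  ∑ k : Fin n, (2 ^ (n - (k : ℕ)) - 1) * j k = m + 1

/-- `α_j(k)`: for `K : Fin n`, `alphaF n m j K` is the paper's `α_j(K+1)`, i.e.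
`m / 2^(n-K) - ∑_{I < K} 2^(K-I) j_{I+1}`. -/
def alphaF (n m : ℕ) (j : Fin n → ℕ) (K : Fin n) : ℚ :=
  (m : ℚ) / 2 ^ (n - (K : ℕ)) -
    ∑ I : Fin n, if (I : ℕ) < (K : ℕ) then 2 ^ ((K : ℕ) - (I : ℕ)) * (j I : ℚ) else 0

/-- `P(j) = ∏_{k=1}^n C_{j_k}(α_j(k))`. -/
def Pprod (n m : ℕ) (j : Fin n → ℕ) : ℚ :=
  ∏ k : Fin n, genBinom (alphaF n m j k) (j k)

/-- `V(j) = -ν(P(j))`, where `ν` is the 2-adic valuation on `ℚ`. -/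
def V (n m : ℕ) (j : Fin n → ℕ) : ℤ := - padicValRat 2 (Pprod n m j)

/- ## Auxiliary lemmas -/

lemma padicValRat_finset_prod (p : ℕ) [hp : Fact p.Prime] {ι : Type*} (s : Finset ι) (f : ι → ℚ)
    (hf : ∀ i ∈ s, f i ≠ 0) :
    padicValRat p (∏ i ∈ s, f i) = ∑ i ∈ s, padicValRat p (f i) := by
  classical
  induction s using Finset.cons_induction with
  | empty => simp
  | cons a s ha ih =>
    rw [Finset.prod_cons, Finset.sum_cons,
      padicValRat.mul (hf a (Finset.mem_cons_self a s))
        (Finset.prod_ne_zero_iff.2 fun i hi => hf i (Finset.mem_cons_of_mem hi)),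
      ih fun i hi => hf i (Finset.mem_cons_of_mem hi)]

lemma sum_three' {n : ℕ} {M : Type*} [AddCommMonoid M] (f : Fin n → M) (a b c : Fin n)
    (hab : a ≠ b) (hac : a ≠ c) (hbc : b ≠ c)
    (h0 : ∀ x, x ≠ a → x ≠ b → x ≠ c → f x = 0) :
    ∑ x, f x = f a + f b + f c := by
  classical
  rw [← Finset.sum_subset (Finset.subset_univ ({a, b, c} : Finset (Fin n)))
    (fun x _ hx => by
      simp only [Finset.mem_insert, Finset.mem_singleton, not_or] at hx
      exact h0 x hx.1 hx.2.1 hx.2.2)]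
  rw [Finset.sum_insert (by simp [hab, hac]), Finset.sum_insert (by simp [hbc]),
    Finset.sum_singleton, add_assoc]

lemma prod_three' {n : ℕ} {M : Type*} [CommMonoid M] (f : Fin n → M) (a b c : Fin n)
    (hab : a ≠ b) (hac : a ≠ c) (hbc : b ≠ c)
    (h0 : ∀ x, x ≠ a → x ≠ b → x ≠ c → f x = 1) :
    ∏ x, f x = f a * f b * f c := by
  classical
  rw [← Finset.prod_subset (Finset.subset_univ ({a, b, c} : Finset (Fin n)))
    (fun x _ hx => by
      simp only [Finset.mem_insert, Finset.mem_singleton, not_or] at hx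
      exact h0 x hx.1 hx.2.1 hx.2.2)]
  rw [Finset.prod_insert (by simp [hab, hac]), Finset.prod_insert (by simp [hbc]),
    Finset.prod_singleton, mul_assoc]

lemma sdig_odd (t : ℕ) : sdig (2 * t + 1) = sdig t + 1 := by
  rw [sdig, Nat.digits_def' (by norm_num : 1 < 2) (by omega)]
  simp [sdig, Nat.add_mul_div_left, Nat.mul_add_mod, add_comm]

lemma sdig_even (t : ℕ) (ht : 0 < t) : sdig (2 * t) = sdig t := by
  rw [sdig, Nat.digits_def' (by norm_num : 1 < 2) (by omega)]
  simp [sdig, Nat.mul_div_cancel_left, Nat.mul_mod_right]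

lemma padicValRat_odd_int (z : ℤ) (hz : z % 2 = 1) : padicValRat 2 (z : ℚ) = 0 := by
  rw [padicValRat.of_int, padicValInt.eq_zero_of_not_dvd (by omega)]
  rfl

lemma genBinom_one (x : ℚ) : genBinom x 1 = x := by
  simp [genBinom]

lemma genBinom_zero (x : ℚ) : genBinom x 0 = 1 := by
  simp [genBinom]

lemma padicValRat_two_two : padicValRat 2 (2 : ℚ) = 1 := by
  simpa using padicValRat.self (p := 2) one_lt_two

/-- If `m ≡ 22 mod 24`, then `j‴ = (0, …, 1, (m-7)/3, 1)` lies in `J`,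
`P(j‴) ≠ 0`, and `V(j‴) = (2/3)(m-1) - s((m-1)/3) - 1`. -/
theorem stmt19 (n m : ℕ) (hn : 3 ≤ n) (hm : 1 ≤ m) (hmn : m ≤ 2 ^ (n + 1) - 3)
    (h24 : m % 24 = 22)
    (j3 : Fin n → ℕ)
    (hj3 : j3 = fun k : Fin n =>
      if (k : ℕ) = n - 3 then 1
      else if (k : ℕ) = n - 2 then (m - 7) / 3
      else if (k : ℕ) = n - 1 then 1 else 0) :
    inJ n m j3 ∧ Pprod n m j3 ≠ 0 ∧
      V n m j3 = ((2 * (m - 1)) / 3 : ℕ) - (sdig ((m - 1) / 3) : ℤ) - 1 := by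
  -- set up the arithmetic shape of m
  obtain ⟨t, hmt⟩ : ∃ t, m = 24 * t + 22 := ⟨m / 24, by omega⟩
  set r : ℕ := 8 * t + 5 with hrdef
  -- the three special indices
  obtain ⟨a, ha⟩ : ∃ a : Fin n, (a : ℕ) = n - 3 := ⟨⟨n - 3, by omega⟩, rfl⟩
  obtain ⟨b, hb⟩ : ∃ b : Fin n, (b : ℕ) = n - 2 := ⟨⟨n - 2, by omega⟩, rfl⟩
  obtain ⟨c, hc⟩ : ∃ c : Fin n, (c : ℕ) = n - 1 := ⟨⟨n - 1, by omega⟩, rfl⟩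
  have hab : a ≠ b := fun h => by rw [h, hb] at ha; omega
  have hac : a ≠ c := fun h => by rw [h, hc] at ha; omega
  have hbc : b ≠ c := fun h => by rw [h, hc] at hb; omega
  -- values of j3
  have hja : j3 a = 1 := by simp [hj3, ha]
  have hjb : j3 b = r := by
    simp [hj3, hb, show ¬(n - 2 = n - 3) from by omega]
    omega
  have hjc : j3 c = 1 := by
    simp [hj3, hc, show ¬(n - 1 = n - 3) from by omega, show ¬(n - 1 = n - 2) from by omega]
  have hj0 : ∀ x : Fin n, (x : ℕ) ≠ n - 3 → (x : ℕ) ≠ n - 2 → (x : ℕ) ≠ n - 1 → j3 x = 0 := by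
    intro x h1 h2 h3; simp [hj3, h1, h2, h3]
  have hvne : ∀ x : Fin n, x ≠ a → x ≠ b → x ≠ c →
      (x : ℕ) ≠ n - 3 ∧ (x : ℕ) ≠ n - 2 ∧ (x : ℕ) ≠ n - 1 := by
    intro x hxa hxb hxc
    refine ⟨fun h => hxa ?_, fun h => hxb ?_, fun h => hxc ?_⟩ <;>
      [exact Fin.val_injective (by rw [h, ha]);
       exact Fin.val_injective (by rw [h, hb]);
       exact Fin.val_injective (by rw [h, hc])]
  -- casts
  have hmq : (m : ℚ) = 24 * t + 22 := by rw [hmt]; push_cast; ring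
  have hrq : (r : ℚ) = 8 * t + 5 := by rw [hrdef]; push_cast; ring
  -- membership in J
  have hinJ : inJ n m j3 := by
    unfold inJ
    rw [sum_three' _ a b c hab hac hbc (fun x hxa hxb hxc => by
      obtain ⟨h1, h2, h3⟩ := hvne x hxa hxb hxc
      rw [hj0 x h1 h2 h3, mul_zero])]
    rw [ha, hb, hc, hja, hjb, hjc,
      show n - (n - 3) = 3 from by omega, show n - (n - 2) = 2 from by omega,
      show n - (n - 1) = 1 from by omega]
    norm_num
    omega
  -- α at a
  have hαa : alphaF n m j3 a = (m : ℚ) / 8 := by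
    simp only [alphaF, ha, show n - (n - 3) = 3 from by omega]
    rw [Finset.sum_eq_zero (fun I _ => by
      by_cases h : (I : ℕ) < n - 3
      · rw [if_pos h, hj0 I (by omega) (by omega) (by omega)]; simp
      · rw [if_neg h])]
    norm_num
  -- α at b
  have hαb : alphaF n m j3 b = (m : ℚ) / 4 - 2 := by
    simp only [alphaF, hb, show n - (n - 2) = 2 from by omega]
    rw [Finset.sum_eq_single_of_mem a (Finset.mem_univ a) (fun I _ hIa => by
      by_cases h : (I : ℕ) < n - 2
      · have h1 : (I : ℕ) ≠ n - 3 := fun he => hIa (Fin.val_injective (by rw [he, ha]))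
        rw [if_pos h, hj0 I h1 (by omega) (by omega)]; simp
      · rw [if_neg h])]
    rw [if_pos (show (a : ℕ) < n - 2 from by omega), ha, hja,
      show n - 2 - (n - 3) = 1 from by omega]
    norm_num
  -- α at c
  have hαc : alphaF n m j3 c = ((-(4 * (t : ℤ) + 3) : ℤ) : ℚ) := by
    simp only [alphaF, hc, show n - (n - 1) = 1 from by omega]
    rw [sum_three' _ a b c hab hac hbc (fun x hxa hxb hxc => by
      obtain ⟨h1, h2, h3⟩ := hvne x hxa hxb hxc
      by_cases h : (x : ℕ) < n - 1
      · rw [if_pos h, hj0 x h1 h2 h3]; simp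
      · rw [if_neg h])]
    rw [if_pos (show (a : ℕ) < n - 1 from by omega),
      if_pos (show (b : ℕ) < n - 1 from by omega),
      if_neg (show ¬((c : ℕ) < n - 1) from by omega),
      ha, hb, hja, hjb, show n - 1 - (n - 3) = 2 from by omega,
      show n - 1 - (n - 2) = 1 from by omega, hmq, hrq]
    push_cast
    ring
  -- the product P
  have hP : Pprod n m j3 =
      ((m : ℚ) / 8) * genBinom ((m : ℚ) / 4 - 2) r * ((-(4 * (t : ℤ) + 3) : ℤ) : ℚ) := by
    unfold Pprod
    rw [prod_three' _ a b c hab hac hbc (fun x hxa hxb hxc => by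
      obtain ⟨h1, h2, h3⟩ := hvne x hxa hxb hxc
      rw [hj0 x h1 h2 h3, genBinom_zero]),
      hja, hjb, hjc, hαa, hαb, hαc, genBinom_one, genBinom_one]
  -- analysis of the middle binomial factor
  have hzodd : ∀ p : ℕ, (12 * (t : ℤ) + 7 - 2 * p) % 2 = 1 := fun p => by omega
  have hzne : ∀ p : ℕ, (12 * (t : ℤ) + 7 - 2 * p) ≠ 0 := fun p => by omega
  have hfacne : ∀ p ∈ Finset.range r, ((12 * (t : ℤ) + 7 - 2 * p : ℤ) : ℚ) / 2 ≠ 0 := by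
    intro p _
    exact div_ne_zero (Int.cast_ne_zero.2 (hzne p)) two_ne_zero
  have hBeq : genBinom ((m : ℚ) / 4 - 2) r =
      (∏ p ∈ Finset.range r, ((12 * (t : ℤ) + 7 - 2 * p : ℤ) : ℚ) / 2) / (Nat.factorial r : ℚ) := by
    rw [genBinom]
    congr 1
    refine Finset.prod_congr rfl fun p _ => ?_
    rw [hmq]
    push_cast
    ring
  have hfactne : (Nat.factorial r : ℚ) ≠ 0 := Nat.cast_ne_zero.2 (Nat.factorial_ne_zero r)
  have hprodne : (∏ p ∈ Finset.range r, ((12 * (t : ℤ) + 7 - 2 * p : ℤ) : ℚ) / 2) ≠ 0 :=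
    Finset.prod_ne_zero_iff.2 hfacne
  have hBne : genBinom ((m : ℚ) / 4 - 2) r ≠ 0 := by
    rw [hBeq]; exact div_ne_zero hprodne hfactne
  -- valuation of each factor of the numerator product
  have hνfac : ∀ p ∈ Finset.range r,
      padicValRat 2 (((12 * (t : ℤ) + 7 - 2 * p : ℤ) : ℚ) / 2) = -1 := by
    intro p _
    rw [padicValRat.div (p := 2) (Int.cast_ne_zero.2 (hzne p)) two_ne_zero,
      padicValRat_odd_int _ (hzodd p), padicValRat_two_two]
    norm_num
  -- Legendre
  have hsle : sdig r ≤ r := Nat.digit_sum_le 2 r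
  have hνfact : padicValRat 2 (Nat.factorial r : ℚ) = (r : ℤ) - sdig r := by
    rw [padicValRat.of_nat]
    have hleg := sub_one_mul_padicValNat_factorial (p := 2) r
    have : padicValNat 2 (Nat.factorial r) = r - sdig r := by
      simpa [sdig] using hleg
    rw [this]
    push_cast [Nat.cast_sub hsle]
    ring
  have hνB : padicValRat 2 (genBinom ((m : ℚ) / 4 - 2) r) = -(r : ℤ) - ((r : ℤ) - sdig r) := by
    rw [hBeq, padicValRat.div (p := 2) hprodne hfactne,
      padicValRat_finset_prod 2 _ _ hfacne, Finset.sum_congr rfl hνfac, hνfact]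
    simp
  -- valuation of the first factor
  have hAeq : (m : ℚ) / 8 = ((12 * (t : ℤ) + 11 : ℤ) : ℚ) / (2 : ℚ) ^ 2 := by
    rw [hmq]; push_cast; ring
  have hAne : (m : ℚ) / 8 ≠ 0 := by
    rw [hAeq]
    exact div_ne_zero (Int.cast_ne_zero.2 (by omega)) (by norm_num)
  have hνA : padicValRat 2 ((m : ℚ) / 8) = -2 := by
    rw [hAeq, padicValRat.div (p := 2) (Int.cast_ne_zero.2 (by omega)) (by norm_num),
      padicValRat_odd_int _ (by omega), padicValRat.pow (p := 2) (2 : ℚ),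
      padicValRat_two_two]
    ring
  -- valuation of the last factor
  have hCne : ((-(4 * (t : ℤ) + 3) : ℤ) : ℚ) ≠ 0 := Int.cast_ne_zero.2 (by omega)
  have hνC : padicValRat 2 ((-(4 * (t : ℤ) + 3) : ℤ) : ℚ) = 0 :=
    padicValRat_odd_int _ (by omega)
  -- nonvanishing of P
  have hPne : Pprod n m j3 ≠ 0 := by
    rw [hP]
    exact mul_ne_zero (mul_ne_zero hAne hBne) hCne
  refine ⟨hinJ, hPne, ?_⟩
  -- valuation of P
  have hνP : padicValRat 2 (Pprod n m j3) =
      -2 + (-(r : ℤ) - ((r : ℤ) - sdig r)) + 0 := by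
    rw [hP, padicValRat.mul (p := 2) (mul_ne_zero hAne hBne) hCne,
      padicValRat.mul (p := 2) hAne hBne, hνA, hνB, hνC]
  -- digit sums
  have hs1 : sdig r = sdig t + 2 := by
    have h1 : (8 * t + 5 : ℕ) = 2 * (2 * (2 * t + 1)) + 1 := by ring
    rw [hrdef, h1, sdig_odd, sdig_even _ (by omega), sdig_odd]
  have hs2 : sdig ((m - 1) / 3) = sdig t + 3 := by
    have h0 : (m - 1) / 3 = 8 * t + 7 := by omega
    have h1 : (8 * t + 7 : ℕ) = 2 * (2 * (2 * t + 1) + 1) + 1 := by ring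
    rw [h0, h1, sdig_odd, sdig_odd, sdig_odd]
  have h3 : (2 * (m - 1)) / 3 = 16 * t + 14 := by omega
  rw [V, hνP, hs2, h3, hs1]
  have hst : sdig t ≤ t := Nat.digit_sum_le 2 t
  push_cast
  omega
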